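/- Under the prior probability shift model, if the training conditional mean is E(Y₁|X₁=x) = μ₁(xᵀβ) with μ₁ strictly increasing, and the canonical parameter θ(x) is a strictly increasing function of xᵀβ, then there exists a nondecreasing function μ₂ such that the testing conditional mean satisfies E(Y₂|X₂=x) = μ₂(xᵀβ). -/

import Mathlib

open MeasureTheory Real

/-- Core monotone-likelihood-ratio inequality: for a nonnegative weight `w`,
the tilted mean `(∫ y * w y * exp (y*t/a)) / (∫ w y * exp (y*t/a))` is
nondecreasing in `t` (for `a > 0`). -/
lemma mlr_core (a : ℝ) (ha : 0 < a) (w : ℝ → ℝ) (hw : ∀ y, 0 ≤ w y)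
    (t t' : ℝ) (htt : t ≤ t')
    (hB : Integrable (fun y => w y * Real.exp (y * t / a)))
    (hA : Integrable (fun y => y * (w y * Real.exp (y * t / a))))
    (hB' : Integrable (fun y => w y * Real.exp (y * t' / a)))
    (hA' : Integrable (fun y => y * (w y * Real.exp (y * t' / a))))
    (hBpos : 0 < ∫ y, w y * Real.exp (y * t / a))
    (hB'pos : 0 < ∫ y, w y * Real.exp (y * t' / a)) :
    (∫ y, y * (w y * Real.exp (y * t / a))) / (∫ y, w y * Real.exp (y * t / a)) ≤
    (∫ y, y * (w y * Real.exp (y * t' / a))) / (∫ y, w y * Real.exp (y * t' / a)) := by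
  set W : ℝ → ℝ := fun y => w y * Real.exp (y * t / a) with hW
  set W' : ℝ → ℝ := fun y => w y * Real.exp (y * t' / a) with hW'
  set u : ℝ → ℝ := fun y => y * W' y with hu
  set v : ℝ → ℝ := fun y => y * W y with hv
  rw [div_le_div_iff₀ hBpos hB'pos]
  set A : ℝ := ∫ y, v y with hA0
  set B : ℝ := ∫ y, W y with hB0
  set A' : ℝ := ∫ y, u y with hA'0
  set B' : ℝ := ∫ y, W' y with hB'0
  -- the symmetrized integrand
  set G : ℝ × ℝ → ℝ := fun q =>
    (u q.1 * W q.2 - W' q.1 * v q.2) + (W q.1 * u q.2 - v q.1 * W' q.2) with hG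
  have hGint1 : Integrable (fun q : ℝ × ℝ => u q.1 * W q.2) (volume.prod volume) :=
    hA'.mul_prod hB
  have hGint2 : Integrable (fun q : ℝ × ℝ => W' q.1 * v q.2) (volume.prod volume) :=
    hB'.mul_prod hA
  have hGint3 : Integrable (fun q : ℝ × ℝ => W q.1 * u q.2) (volume.prod volume) :=
    hB.mul_prod hA'
  have hGint4 : Integrable (fun q : ℝ × ℝ => v q.1 * W' q.2) (volume.prod volume) :=
    hA.mul_prod hB'
  have hGval : (∫ q : ℝ × ℝ, G q ∂(volume.prod volume)) = 2 * (A' * B - A * B') := by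
    simp only [hG]
    have hGint12 : Integrable (fun q : ℝ × ℝ => u q.1 * W q.2 - W' q.1 * v q.2)
        (volume.prod volume) := hGint1.sub hGint2
    have hGint34 : Integrable (fun q : ℝ × ℝ => W q.1 * u q.2 - v q.1 * W' q.2)
        (volume.prod volume) := hGint3.sub hGint4
    rw [integral_add hGint12 hGint34,
      integral_sub hGint1 hGint2, integral_sub hGint3 hGint4,
      integral_prod_mul, integral_prod_mul, integral_prod_mul, integral_prod_mul]
    rw [← hA0, ← hB0, ← hA'0, ← hB'0]
    ring
  have hGnonneg : ∀ q : ℝ × ℝ, 0 ≤ G q := by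
    rintro ⟨y, z⟩
    have hfact : G (y, z) = (y - z) * (w y * w z *
        (Real.exp (y * t' / a + z * t / a) - Real.exp (z * t' / a + y * t / a))) := by
      simp only [hG, hu, hv, hW, hW', Real.exp_add]
      ring
    rw [hfact]
    rcases le_total z y with h | h
    · apply mul_nonneg (by linarith)
      apply mul_nonneg (mul_nonneg (hw y) (hw z))
      rw [sub_nonneg, Real.exp_le_exp]
      have : z * t' + y * t ≤ y * t' + z * t := by nlinarith
      rw [← add_div, ← add_div]
      gcongr
    · have h1 : y - z ≤ 0 := by linarith
      have h2 : w y * w z *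
          (Real.exp (y * t' / a + z * t / a) - Real.exp (z * t' / a + y * t / a)) ≤ 0 := by
        apply mul_nonpos_of_nonneg_of_nonpos (mul_nonneg (hw y) (hw z))
        rw [sub_nonpos, Real.exp_le_exp]
        have : y * t' + z * t ≤ z * t' + y * t := by nlinarith
        rw [← add_div, ← add_div]
        gcongr
      nlinarith [mul_nonneg (neg_nonneg.2 h1) (neg_nonneg.2 h2)]
  have hpos : 0 ≤ ∫ q : ℝ × ℝ, G q ∂(volume.prod volume) :=
    integral_nonneg hGnonneg
  rw [hGval] at hpos
  nlinarith

/-- Proposition 1 (prior probability shift model).  Training density: canonical exponential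
family `f y x = exp ((y * θ x − b (θ x))/a + c y)` with `a > 0`, whose mean is
`μ₁ (xᵀβ)` with `μ₁` strictly increasing, and the canonical parameter `θ x = T (xᵀβ)` with `T`
strictly increasing.  Testing density `f* y x = sel y * f y x / ∫ sel f`, with positive finite
normalizer, and testing conditional mean `mstar x = ∫ y f*(y|x) dy`.  Then there exists a
nondecreasing function `μ₂` such that `mstar x = μ₂ (xᵀβ)` for all `x`. -/
theorem testing_mean_is_monotone_single_index
    {p : ℕ} (β : Fin p → ℝ) (a : ℝ) (ha : 0 < a)
    (θ : (Fin p → ℝ) → ℝ) (T : ℝ → ℝ) (hT : StrictMono T)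
    (hθ : ∀ x, θ x = T (∑ i, x i * β i))
    (b : ℝ → ℝ) (c : ℝ → ℝ) (sel : ℝ → ℝ) (hsel : ∀ y, 0 ≤ sel y)
    (f fstar : ℝ → (Fin p → ℝ) → ℝ)
    (hf : ∀ y x, f y x = Real.exp ((y * θ x - b (θ x)) / a + c y))
    (μ₁ : ℝ → ℝ) (hμ₁ : StrictMono μ₁)
    (hmean1 : ∀ x, deriv b (θ x) = μ₁ (∑ i, x i * β i))
    (hNint : ∀ x, Integrable (fun y : ℝ => sel y * f y x))
    (hNpos : ∀ x, 0 < ∫ y : ℝ, sel y * f y x)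
    (hfstar : ∀ y x, fstar y x = sel y * f y x / ∫ z : ℝ, sel z * f z x)
    (hstarint : ∀ x, Integrable (fun y : ℝ => y * fstar y x))
    (mstar : (Fin p → ℝ) → ℝ)
    (hmstar : ∀ x, mstar x = ∫ y : ℝ, y * fstar y x) :
    ∃ μ₂ : ℝ → ℝ, Monotone μ₂ ∧ ∀ x, mstar x = μ₂ (∑ i, x i * β i) := by
  classical
  set w : ℝ → ℝ := fun y => sel y * Real.exp (c y) with hwdef
  have hwnn : ∀ y, 0 ≤ w y := fun y => mul_nonneg (hsel y) (Real.exp_pos _).le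
  -- pointwise factorization of the unnormalized testing density
  have hrel : ∀ x y, sel y * f y x =
      (w y * Real.exp (y * θ x / a)) * Real.exp (-b (θ x) / a) := by
    intro x y
    rw [hf, hwdef]
    have hexp : (y * θ x - b (θ x)) / a + c y
        = c y + y * θ x / a + -b (θ x) / a := by ring
    rw [hexp, Real.exp_add, Real.exp_add]
    ring
  have hWint : ∀ x, Integrable (fun y => w y * Real.exp (y * θ x / a)) := by
    intro x
    have h1 := (hNint x).mul_const (Real.exp (b (θ x) / a))
    refine h1.congr (Filter.Eventually.of_forall fun y => ?_)
    simp only []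
    rw [hrel x y, mul_assoc, ← Real.exp_add]
    have : -b (θ x) / a + b (θ x) / a = 0 := by ring
    rw [this, Real.exp_zero, mul_one]
  have hNval : ∀ x, (∫ y : ℝ, sel y * f y x) =
      (∫ y, w y * Real.exp (y * θ x / a)) * Real.exp (-b (θ x) / a) := by
    intro x
    simp_rw [hrel x]
    rw [integral_mul_const]
  have hWpos : ∀ x, 0 < ∫ y, w y * Real.exp (y * θ x / a) := by
    intro x
    have h := hNpos x
    rw [hNval x] at h
    have he := Real.exp_pos (-b (θ x) / a)
    nlinarith
  have hyWint : ∀ x, Integrable (fun y => y * (w y * Real.exp (y * θ x / a))) := by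
    intro x
    have hN0 : (∫ z : ℝ, sel z * f z x) ≠ 0 := (hNpos x).ne'
    have h1 := (hstarint x).mul_const
      ((∫ z : ℝ, sel z * f z x) / Real.exp (-b (θ x) / a))
    refine h1.congr (Filter.Eventually.of_forall fun y => ?_)
    simp only []
    rw [hfstar y x, hrel x y]
    field_simp
  have hmx : ∀ x, mstar x = (∫ y, y * (w y * Real.exp (y * θ x / a))) /
      (∫ y, w y * Real.exp (y * θ x / a)) := by
    intro x
    rw [hmstar x]
    have hN0 : (∫ z : ℝ, sel z * f z x) ≠ 0 := (hNpos x).ne'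
    have hpt : ∀ y, y * fstar y x = (y * (w y * Real.exp (y * θ x / a))) *
        (Real.exp (-b (θ x) / a) / (∫ z : ℝ, sel z * f z x)) := by
      intro y
      rw [hfstar y x, hrel x y]
      ring
    simp_rw [hpt]
    rw [integral_mul_const, hNval x]
    have hC := (hWpos x).ne'
    have hE := Real.exp_ne_zero (-b (θ x) / a)
    have key : Real.exp (-b (θ x) / a) / ((∫ y, w y * Real.exp (y * θ x / a)) *
        Real.exp (-b (θ x) / a)) = 1 / ∫ y, w y * Real.exp (y * θ x / a) := by
      rw [mul_comm (∫ y, w y * Real.exp (y * θ x / a)) (Real.exp (-b (θ x) / a)),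
        div_mul_eq_div_div, div_self hE]
    rw [key, mul_one_div]
  by_cases hb : ∀ i, β i = 0
  · refine ⟨fun _ => mstar (fun _ => 0), monotone_const, fun x => ?_⟩
    have hθeq : θ x = θ (fun _ => 0) := by
      rw [hθ, hθ]
      congr 1
      simp [hb]
    rw [hmx x, hmx (fun _ => 0), hθeq]
  · push_neg at hb
    obtain ⟨j, hj⟩ := hb
    set e : ℝ → (Fin p → ℝ) := fun s i => if i = j then s / β j else 0 with hedef
    have hes : ∀ s, (∑ i, e s i * β i) = s := by
      intro s
      rw [Finset.sum_eq_single j]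
      · simp [hedef, div_mul_cancel₀ _ hj]
      · intro i _ hij
        simp [hedef, hij]
      · simp
    have hθe : ∀ s, θ (e s) = T s := by
      intro s
      rw [hθ, hes]
    refine ⟨fun s => (∫ y, y * (w y * Real.exp (y * T s / a))) /
      (∫ y, w y * Real.exp (y * T s / a)), ?_, fun x => ?_⟩
    · intro s s' hss
      have h1 := hWint (e s); rw [hθe s] at h1
      have h2 := hyWint (e s); rw [hθe s] at h2
      have h1' := hWint (e s'); rw [hθe s'] at h1'
      have h2' := hyWint (e s'); rw [hθe s'] at h2'
      have hp1 := hWpos (e s); rw [hθe s] at hp1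
      have hp2 := hWpos (e s'); rw [hθe s'] at hp2
      exact mlr_core a ha w hwnn (T s) (T s') (hT.monotone hss) h1 h2 h1' h2' hp1 hp2
    · rw [hmx x, hθ x]
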